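/- arXiv:1810.09921 — 2 statements merged into one kernel-verified Lean document; each statement's English description precedes it below -/
import Mathlib

section
/- Fix r ≥ 2 and μ with μ_i > 0 for all i. Let K : ℕ → ℕ^r be a scaling with K_{1,n} = 1 for all n and K_{r,n} = O(1). Then C(n, 2) · E[χ_{12}(n; μ, K_n)] = (1 + o(1)) · (μ_1²/2) · exp(−2 K_avg,n) as n → ∞, where χ_{12} is the indicator of the event U_{12} and K_avg,n = Σ_{i=1}^r μ_i K_{i,n}; equivalently, the ratio of C(n,2)·E[χ_{12}] to (μ_1²/2)e^{−2K_avg,n} tends to 1. -/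
open Finset Filter

noncomputable section

/-- A configuration assigns to each vertex a class in `Fin r` and a selection set. -/
abbrev Config (n r : ℕ) := Fin n → Fin r × Finset (Fin n)

/-- Probability weight of a configuration: each vertex `v` independently has class `i`
with probability `μ i`, and given class `i`, its selection set is a uniformly random
`K i`-subset of the other vertices. -/
noncomputable def wt {r : ℕ} (n : ℕ) (μ : Fin r → ℝ) (K : Fin r → ℕ)
    (ω : Config n r) : ℝ :=
  ∏ v : Fin n,
    if (ω v).2.card = K (ω v).1 ∧ v ∉ (ω v).2 then
      μ (ω v).1 / ((n - 1).choose (K (ω v).1) : ℝ)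
    else 0

/-- Probability of an event in the inhomogeneous random K-out graph model. -/
noncomputable def Pr {r : ℕ} (n : ℕ) (μ : Fin r → ℝ) (K : Fin r → ℕ)
    (E : Set (Config n r)) : ℝ :=
  ∑ ω : Config n r, E.indicator (wt n μ K) ω

/-- Expectation of a real-valued random variable in the model. -/
noncomputable def Ex {r : ℕ} (n : ℕ) (μ : Fin r → ℝ) (K : Fin r → ℕ)
    (f : Config n r → ℝ) : ℝ :=
  ∑ ω : Config n r, f ω * wt n μ K ω

/-- The undirected graph induced by a configuration: `u ~ v` iff at least one of
them selected the other. -/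
def graphOf {n r : ℕ} (ω : Config n r) : SimpleGraph (Fin n) where
  Adj u v := u ≠ v ∧ (u ∈ (ω v).2 ∨ v ∈ (ω u).2)
  symm := ⟨fun _ _ h => ⟨h.1.symm, h.2.symm⟩⟩
  loopless := ⟨fun _ h => h.1 rfl⟩

/-- Probability that the inhomogeneous random K-out graph is connected. -/
noncomputable def Pconn {r : ℕ} (n : ℕ) (μ : Fin r → ℝ) (K : Fin r → ℕ) : ℝ :=
  Pr n μ K {ω | (graphOf ω).Connected}

/-- The event `U_{ij}`: vertices `i` and `j` both have class `c`, each selected exactly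
the other, and no other vertex selected either of them. -/
def Uevent {n r : ℕ} (c : Fin r) (i j : Fin n) : Set (Config n r) :=
  {ω | (ω i).1 = c ∧ (ω j).1 = c ∧ (ω i).2 = {j} ∧ (ω j).2 = {i} ∧
    ∀ l : Fin n, l ≠ i → l ≠ j → i ∉ (ω l).2 ∧ j ∉ (ω l).2}

/-- `Y`: the number of isolated components consisting of two class-`c` vertices. -/
noncomputable def Ycount {n r : ℕ} (c : Fin r) (ω : Config n r) : ℝ :=
  ∑ p : Fin n × Fin n,
    if p.1 < p.2 then (Uevent c p.1 p.2).indicator (fun _ => (1 : ℝ)) ω else 0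

/-- The event `B_{n,ℓ}`: the set of vertices with index `< ℓ` is isolated, i.e. there is
no edge between it and its complement. -/
def Bevent (n r : ℕ) (l : ℕ) : Set (Config n r) :=
  {ω | ∀ u v : Fin n, (u : ℕ) < l → ¬ (v : ℕ) < l → u ∉ (ω v).2 ∧ v ∉ (ω u).2}

variable {r : ℕ}

lemma fin_zero_ne_one (p : ℕ) : (0 : Fin (p+3)) ≠ 1 := by
  simp [Fin.ext_iff]

lemma count_lemma (p : ℕ) (v : Fin (p+3)) (hv0 : v ≠ 0) (hv1 : v ≠ 1) (k : ℕ) :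
    (univ.filter (fun S : Finset (Fin (p+3)) =>
      ((0 : Fin (p+3)) ∉ S ∧ (1 : Fin (p+3)) ∉ S) ∧ (S.card = k ∧ v ∉ S))).card
      = p.choose k := by
  have he : univ.filter (fun S : Finset (Fin (p+3)) =>
      ((0 : Fin (p+3)) ∉ S ∧ (1 : Fin (p+3)) ∉ S) ∧ (S.card = k ∧ v ∉ S))
      = (univ \ {0, 1, v}).powersetCard k := by
    ext S
    simp only [mem_filter, mem_univ, true_and, Finset.mem_powersetCard,
      Finset.subset_sdiff, Finset.subset_univ, true_and,
      Finset.disjoint_insert_right, Finset.disjoint_singleton_right]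
    tauto
  rw [he, Finset.card_powersetCard]
  congr 1
  rw [Finset.card_sdiff_of_subset (Finset.subset_univ _)]
  have h3 : ({0, 1, v} : Finset (Fin (p+3))).card = 3 := by
    rw [Finset.card_insert_of_notMem, Finset.card_insert_of_notMem, Finset.card_singleton]
    · simp [Ne.symm hv1]
    · simp [fin_zero_ne_one p, Ne.symm hv0]
  simp [h3]
open Classical in
/-- per-vertex weight function whose product gives indicator times weight -/
noncomputable def gfun (p : ℕ) (μ : Fin r → ℝ) (K : Fin r → ℕ) (c0 : Fin r)
    (v : Fin (p+3)) (a : Fin r × Finset (Fin (p+3))) : ℝ :=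
  (if (if v = 0 then a = (c0, {1}) else if v = 1 then a = (c0, {0})
      else ((0 : Fin (p+3)) ∉ a.2 ∧ (1 : Fin (p+3)) ∉ a.2)) then (1:ℝ) else 0) *
  (if a.2.card = K a.1 ∧ v ∉ a.2 then μ a.1 / (((p+2).choose (K a.1) : ℕ) : ℝ) else 0)

lemma indicator_eq_prod (p : ℕ) (μ : Fin r → ℝ) (K : Fin r → ℕ) (c0 : Fin r)
    (ω : Config (p+3) r) :
    (Uevent c0 0 1).indicator (wt (p+3) μ K) ω = ∏ v, gfun p μ K c0 v (ω v) := by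
  classical
  by_cases h : ω ∈ Uevent c0 (0 : Fin (p+3)) 1
  · rw [Set.indicator_of_mem h]
    obtain ⟨h1, h2, h3, h4, h5⟩ := h
    unfold wt gfun
    refine Finset.prod_congr rfl fun v _ => ?_
    have hcond : (if v = 0 then ω v = (c0, ({1} : Finset (Fin (p+3)))) else if v = 1 then ω v = (c0, {0})
        else ((0 : Fin (p+3)) ∉ (ω v).2 ∧ (1 : Fin (p+3)) ∉ (ω v).2)) := by
      by_cases hv0 : v = 0
      · subst hv0; simp only [if_pos rfl]
        exact Prod.ext h1 h3
      · by_cases hv1 : v = 1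
        · subst hv1; rw [if_neg hv0, if_pos rfl]
          exact Prod.ext h2 h4
        · rw [if_neg hv0, if_neg hv1]
          exact h5 v hv0 hv1
    rw [if_pos hcond, one_mul]
    rfl
  · rw [Set.indicator_of_notMem h]
    simp only [Uevent, Set.mem_setOf_eq] at h
    by_cases h0 : ω 0 = (c0, ({1} : Finset (Fin (p+3))))
    · by_cases h1 : ω 1 = (c0, ({0} : Finset (Fin (p+3))))
      · -- then the forall fails
        have : ¬ ∀ l : Fin (p+3), l ≠ 0 → l ≠ 1 → (0 : Fin (p+3)) ∉ (ω l).2 ∧ (1 : Fin (p+3)) ∉ (ω l).2 := by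
          intro hall
          exact h ⟨by rw [h0], by rw [h1], by rw [h0], by rw [h1], hall⟩
        push_neg at this
        obtain ⟨l, hl0, hl1, hl⟩ := this
        refine (Finset.prod_eq_zero (Finset.mem_univ l) ?_).symm
        unfold gfun
        rw [if_neg, zero_mul]
        rw [if_neg hl0, if_neg hl1]
        intro hc
        exact hc.2 (hl hc.1)
      · refine (Finset.prod_eq_zero (Finset.mem_univ 1) ?_).symm
        unfold gfun
        rw [if_neg, zero_mul]
        rw [if_neg (fin_zero_ne_one p).symm, if_pos rfl]
        exact h1
    · refine (Finset.prod_eq_zero (Finset.mem_univ 0) ?_).symm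
      unfold gfun
      rw [if_neg, zero_mul]
      rw [if_pos rfl]
      exact h0

lemma sum_g_zero (p : ℕ) (μ : Fin r → ℝ) (K : Fin r → ℕ) (c0 : Fin r) (hK : K c0 = 1) :
    ∑ a : Fin r × Finset (Fin (p+3)), gfun p μ K c0 0 a = μ c0 / ((p:ℝ)+2) := by
  classical
  have hrw : ∀ a : Fin r × Finset (Fin (p+3)), gfun p μ K c0 0 a =
      if a = (c0, ({1} : Finset (Fin (p+3)))) then
        (if a.2.card = K a.1 ∧ (0 : Fin (p+3)) ∉ a.2 then
          μ a.1 / (((p+2).choose (K a.1) : ℕ) : ℝ) else 0) else 0 := by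
    intro a
    unfold gfun
    by_cases h : a = (c0, ({1} : Finset (Fin (p+3)))) <;> simp [h]
  rw [Finset.sum_congr rfl fun a _ => hrw a, Finset.sum_ite_eq' Finset.univ]
  rw [if_pos (Finset.mem_univ _)]
  have h01 : (0 : Fin (p+3)) ∉ ({1} : Finset (Fin (p+3))) := by
    simp [fin_zero_ne_one p]
  rw [if_pos ⟨by simp [hK], h01⟩]
  simp [hK, Nat.choose_one_right]

lemma sum_g_one (p : ℕ) (μ : Fin r → ℝ) (K : Fin r → ℕ) (c0 : Fin r) (hK : K c0 = 1) :
    ∑ a : Fin r × Finset (Fin (p+3)), gfun p μ K c0 1 a = μ c0 / ((p:ℝ)+2) := by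
  classical
  have hrw : ∀ a : Fin r × Finset (Fin (p+3)), gfun p μ K c0 1 a =
      if a = (c0, ({0} : Finset (Fin (p+3)))) then
        (if a.2.card = K a.1 ∧ (1 : Fin (p+3)) ∉ a.2 then
          μ a.1 / (((p+2).choose (K a.1) : ℕ) : ℝ) else 0) else 0 := by
    intro a
    unfold gfun
    by_cases h : a = (c0, ({0} : Finset (Fin (p+3)))) <;>
      simp [h, (fin_zero_ne_one p).symm]
  rw [Finset.sum_congr rfl fun a _ => hrw a, Finset.sum_ite_eq' Finset.univ]
  rw [if_pos (Finset.mem_univ _)]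
  have h01 : (1 : Fin (p+3)) ∉ ({0} : Finset (Fin (p+3))) := by
    simp [(fin_zero_ne_one p).symm]
  rw [if_pos ⟨by simp [hK], h01⟩]
  simp [hK, Nat.choose_one_right]

lemma sum_g_other (p : ℕ) (μ : Fin r → ℝ) (K : Fin r → ℕ) (c0 : Fin r)
    (v : Fin (p+3)) (hv0 : v ≠ 0) (hv1 : v ≠ 1) :
    ∑ a : Fin r × Finset (Fin (p+3)), gfun p μ K c0 v a
      = ∑ i, μ i * (p.choose (K i) : ℝ) / ((p+2).choose (K i) : ℝ) := by
  classical
  unfold gfun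
  rw [Fintype.sum_prod_type]
  refine Finset.sum_congr rfl fun i _ => ?_
  simp only [if_neg hv0, if_neg hv1]
  have : ∀ S : Finset (Fin (p+3)),
      (if ((0 : Fin (p+3)) ∉ S ∧ (1 : Fin (p+3)) ∉ S) then (1:ℝ) else 0) *
        (if S.card = K i ∧ v ∉ S then μ i / (((p+2).choose (K i) : ℕ) : ℝ) else 0)
      = if (((0 : Fin (p+3)) ∉ S ∧ (1 : Fin (p+3)) ∉ S) ∧ (S.card = K i ∧ v ∉ S)) then
          μ i / (((p+2).choose (K i) : ℕ) : ℝ) else 0 := by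
    intro S
    by_cases h1 : ((0 : Fin (p+3)) ∉ S ∧ (1 : Fin (p+3)) ∉ S) <;>
      by_cases h2 : (S.card = K i ∧ v ∉ S) <;> simp [h1, h2]
  rw [Finset.sum_congr rfl fun S _ => this S]
  rw [Finset.sum_ite, Finset.sum_const, Finset.sum_const_zero, add_zero,
    count_lemma p v hv0 hv1, nsmul_eq_mul]
  ring

lemma pr_formula (p : ℕ) (μ : Fin r → ℝ) (K : Fin r → ℕ) (c0 : Fin r) (hK : K c0 = 1) :
    Pr (p+3) μ K (Uevent c0 0 1) =
      (μ c0 / ((p:ℝ)+2))^2 *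
        (∑ i, μ i * (p.choose (K i) : ℝ) / ((p+2).choose (K i) : ℝ))^(p+1) := by
  classical
  unfold Pr
  rw [Finset.sum_congr rfl fun ω _ => indicator_eq_prod p μ K c0 ω]
  rw [← Fintype.piFinset_univ, ← Finset.prod_univ_sum]
  have h01 : ({0, 1} : Finset (Fin (p+3))) ⊆ Finset.univ := Finset.subset_univ _
  rw [← Finset.prod_sdiff h01]
  have hpair : ∏ v ∈ ({0, 1} : Finset (Fin (p+3))),
      (∑ a : Fin r × Finset (Fin (p+3)), gfun p μ K c0 v a) = (μ c0 / ((p:ℝ)+2))^2 := by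
    rw [Finset.prod_pair (fin_zero_ne_one p), sum_g_zero p μ K c0 hK, sum_g_one p μ K c0 hK]
    ring
  have hrest : ∏ v ∈ (Finset.univ \ ({0, 1} : Finset (Fin (p+3)))),
      (∑ a : Fin r × Finset (Fin (p+3)), gfun p μ K c0 v a)
      = (∑ i, μ i * (p.choose (K i) : ℝ) / ((p+2).choose (K i) : ℝ))^(p+1) := by
    rw [Finset.prod_congr rfl fun v hv => ?_, Finset.prod_const]
    · congr 1
      rw [Finset.card_sdiff_of_subset h01, Finset.card_pair (fin_zero_ne_one p)]
      simp
    · simp only [Finset.mem_sdiff, Finset.mem_insert, Finset.mem_singleton] at hv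
      exact sum_g_other p μ K c0 v (by tauto) (by tauto)
  rw [hpair, hrest]
  ring

lemma choose_ratio (p k : ℕ) (hk : k ≤ p) :
    (p.choose k : ℝ) / ((p+2).choose k : ℝ)
      = (((p:ℝ)+1-k)/((p:ℝ)+1)) * (((p:ℝ)+2-k)/((p:ℝ)+2)) := by
  have h1 := Nat.choose_mul_succ_eq p k
  have h2 := Nat.choose_mul_succ_eq (p+1) k
  have key : p.choose k * ((p+1)*(p+2)) = (p+2).choose k * ((p+2-k)*(p+1-k)) := by
    calc p.choose k * ((p+1)*(p+2)) = (p.choose k * (p+1)) * (p+2) := by ring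
    _ = ((p+1).choose k * (p+1-k)) * (p+2) := by rw [h1]
    _ = ((p+1).choose k * (p+1+1)) * (p+1-k) := by ring
    _ = ((p+1+1).choose k * (p+1+1-k)) * (p+1-k) := by rw [h2]
    _ = _ := by ring_nf
  have hc2 : (0:ℝ) < ((p+2).choose k : ℝ) := by
    exact_mod_cast Nat.choose_pos (by omega)
  have keyR : (p.choose k : ℝ) * (((p:ℝ)+1)*((p:ℝ)+2))
      = ((p+2).choose k : ℝ) * ((((p:ℝ)+2)-k)*(((p:ℝ)+1)-k)) := by
    have := congrArg (fun n : ℕ => (n : ℝ)) key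
    push_cast [Nat.cast_sub (by omega : k ≤ p+2), Nat.cast_sub (by omega : k ≤ p+1)] at this
    convert this using 2 <;> push_cast <;> ring
  have hp1 : ((p:ℝ)+1) ≠ 0 := by positivity
  have hp2 : ((p:ℝ)+2) ≠ 0 := by positivity
  field_simp
  nlinarith [keyR]


noncomputable def qfun {r : ℕ} (μ : Fin r → ℝ) (K : ℕ → Fin r → ℕ) (p : ℕ) : ℝ :=
  ∑ i, μ i * (p.choose (K (p+3) i) : ℝ) / ((p+2).choose (K (p+3) i) : ℝ)

noncomputable def Sfun {r : ℕ} (μ : Fin r → ℝ) (K : ℕ → Fin r → ℕ) (p : ℕ) : ℝ :=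
  ∑ i, μ i * (K (p+3) i : ℝ)

noncomputable def Efun {r : ℕ} (μ : Fin r → ℝ) (K : ℕ → Fin r → ℕ) (p : ℕ) : ℝ :=
  ((p:ℝ)+1) * Real.log (qfun μ K p) + 2 * Sfun μ K p

lemma pow_eq_exp {x : ℝ} (hx : 0 < x) (n : ℕ) :
    x ^ n = Real.exp ((n:ℝ) * Real.log x) := by
  rw [Real.exp_nat_mul, Real.exp_log hx]

set_option maxHeartbeats 2000000 in

/-- Proposition 1 of the paper. If `K_{1,n} = 1` and `K_{r,n} = O(1)`,
then `C(n,2)·E[χ₁₂] = (1 + o(1))·(μ₁²/2)·exp(−2 K_avg,n)`, i.e. the ratio of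
`C(n,2)·E[χ₁₂]` to `(μ₁²/2) e^{−2 K_avg,n}` tends to `1` (here the sequence is indexed
by `n = m + 2` so that the vertices `1` and `2` exist). -/
theorem first_moment_asymptotics
    (r : ℕ) (hr : 2 ≤ r) (μ : Fin r → ℝ)
    (hμ : ∀ i, 0 < μ i) (hsum : ∑ i, μ i = 1)
    (c0 lst : Fin r) (hc0 : (c0 : ℕ) = 0) (hlst : (lst : ℕ) = r - 1)
    (K : ℕ → Fin r → ℕ)
    (hmono : ∀ n, Monotone (K n))
    (hone : ∀ n i, 1 ≤ K n i)
    (hlt : ∀ n, 2 ≤ n → ∀ i, K n i < n)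
    (hK1 : ∀ n, K n c0 = 1)
    (hO : ∃ B : ℕ, ∀ n, K n lst ≤ B) :
    Filter.Tendsto
      (fun m : ℕ =>
        (((m + 2).choose 2 : ℝ) *
            Pr (m + 2) μ (K (m + 2)) (Uevent c0 (0 : Fin (m + 2)) 1)) /
          ((μ c0) ^ 2 / 2 * Real.exp (-2 * ∑ i, μ i * (K (m + 2) i : ℝ))))
      Filter.atTop (nhds 1) := by
  classical
  obtain ⟨B₀, hB₀⟩ := hO
  set B : ℕ := B₀ + 1 with hBdef
  have hB : ∀ n i, K n i ≤ B := by
    intro n i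
    have h1 : i ≤ lst := by
      rw [Fin.le_def, hlst]
      have := i.isLt; omega
    have h2 := hmono n h1
    have h3 := hB₀ n
    omega
  set Br : ℝ := ((B : ℕ) : ℝ) with hBr
  have hBr1 : (1:ℝ) ≤ Br := by
    rw [hBr]
    have : (1:ℕ) ≤ B := by omega
    exact_mod_cast this
  -- the main eventual bounds
  have main : ∀ᶠ p : ℕ in Filter.atTop,
      0 < qfun μ K p ∧ -(9*Br^2)/((p:ℝ)+1) ≤ Efun μ K p ∧
        Efun μ K p ≤ (Br+Br^2)/((p:ℝ)+1) := by
    filter_upwards [Filter.eventually_ge_atTop (4*B)] with p hp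
    have hp1 : (0:ℝ) < (p:ℝ)+1 := by positivity
    have hp2 : (0:ℝ) < (p:ℝ)+2 := by positivity
    have hpB : 4*Br ≤ (p:ℝ) := by rw [hBr]; exact_mod_cast hp
    have hk1 : ∀ i : Fin r, (1:ℝ) ≤ (K (p+3) i : ℝ) := fun i => by
      exact_mod_cast hone (p+3) i
    have hkB : ∀ i : Fin r, (K (p+3) i : ℝ) ≤ Br := fun i => by
      rw [hBr]; exact_mod_cast hB (p+3) i
    -- exact expression for q
    have hqA : qfun μ K p = ∑ i, μ i * (((((p:ℝ)+1) - (K (p+3) i : ℝ))/((p:ℝ)+1)) *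
        ((((p:ℝ)+2) - (K (p+3) i : ℝ))/((p:ℝ)+2))) := by
      unfold qfun
      refine Finset.sum_congr rfl fun i _ => ?_
      rw [mul_div_assoc, choose_ratio p (K (p+3) i)]
      have := hB (p+3) i
      omega
    have h1q : 1 - qfun μ K p = ∑ i, μ i * (1 - ((((p:ℝ)+1) - (K (p+3) i : ℝ))/((p:ℝ)+1)) *
        ((((p:ℝ)+2) - (K (p+3) i : ℝ))/((p:ℝ)+2))) := by
      rw [hqA,
        Finset.sum_congr rfl (fun i (_ : i ∈ Finset.univ) => (mul_one_sub (μ i) _)),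
        Finset.sum_sub_distrib, hsum]
    -- per-term bounds
    have hab0 : ∀ i : Fin r, 0 ≤ 1 - ((((p:ℝ)+1) - (K (p+3) i : ℝ))/((p:ℝ)+1)) *
        ((((p:ℝ)+2) - (K (p+3) i : ℝ))/((p:ℝ)+2)) := by
      intro i
      have h1 := hk1 i; have h2 := hkB i
      have ha1 : (((p:ℝ)+1) - (K (p+3) i : ℝ))/((p:ℝ)+1) ≤ 1 := by
        rw [div_le_one hp1]; linarith
      have hb1 : (((p:ℝ)+2) - (K (p+3) i : ℝ))/((p:ℝ)+2) ≤ 1 := by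
        rw [div_le_one hp2]; linarith
      have ha0 : 0 ≤ (((p:ℝ)+1) - (K (p+3) i : ℝ))/((p:ℝ)+1) :=
        div_nonneg (by linarith) hp1.le
      have hb0 : 0 ≤ (((p:ℝ)+2) - (K (p+3) i : ℝ))/((p:ℝ)+2) :=
        div_nonneg (by linarith) hp2.le
      nlinarith
    have hab : ∀ i : Fin r, 1 - ((((p:ℝ)+1) - (K (p+3) i : ℝ))/((p:ℝ)+1)) *
        ((((p:ℝ)+2) - (K (p+3) i : ℝ))/((p:ℝ)+2)) ≤ 2*Br/((p:ℝ)+1) := by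
      intro i
      have h1 := hk1 i; have h2 := hkB i
      have ha1 : (((p:ℝ)+1) - (K (p+3) i : ℝ))/((p:ℝ)+1) ≤ 1 := by
        rw [div_le_one hp1]; linarith
      have ha0 : 0 ≤ (((p:ℝ)+1) - (K (p+3) i : ℝ))/((p:ℝ)+1) :=
        div_nonneg (by linarith) hp1.le
      have hb1 : (((p:ℝ)+2) - (K (p+3) i : ℝ))/((p:ℝ)+2) ≤ 1 := by
        rw [div_le_one hp2]; linarith
      have key : 1 - ((((p:ℝ)+1) - (K (p+3) i : ℝ))/((p:ℝ)+1)) *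
          ((((p:ℝ)+2) - (K (p+3) i : ℝ))/((p:ℝ)+2))
          ≤ (1 - (((p:ℝ)+1) - (K (p+3) i : ℝ))/((p:ℝ)+1)) +
            (1 - (((p:ℝ)+2) - (K (p+3) i : ℝ))/((p:ℝ)+2)) := by nlinarith
      have e1 : 1 - (((p:ℝ)+1) - (K (p+3) i : ℝ))/((p:ℝ)+1) = (K (p+3) i : ℝ)/((p:ℝ)+1) := by
        field_simp
        ring
      have e2 : 1 - (((p:ℝ)+2) - (K (p+3) i : ℝ))/((p:ℝ)+2) = (K (p+3) i : ℝ)/((p:ℝ)+2) := by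
        field_simp
        ring
      have b1 : (K (p+3) i : ℝ)/((p:ℝ)+1) ≤ Br/((p:ℝ)+1) := by gcongr
      have b2 : (K (p+3) i : ℝ)/((p:ℝ)+2) ≤ Br/((p:ℝ)+1) := by
        gcongr <;> linarith
      have e3 : 2*Br/((p:ℝ)+1) = Br/((p:ℝ)+1) + Br/((p:ℝ)+1) := by ring
      linarith [key, e1, e2, b1, b2]
    have hx0 : 0 ≤ 1 - qfun μ K p := by
      rw [h1q]
      exact Finset.sum_nonneg fun i _ => mul_nonneg (hμ i).le (hab0 i)
    have hxB : 1 - qfun μ K p ≤ 2*Br/((p:ℝ)+1) := by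
      rw [h1q]
      calc ∑ i, μ i * (1 - ((((p:ℝ)+1) - (K (p+3) i : ℝ))/((p:ℝ)+1)) *
          ((((p:ℝ)+2) - (K (p+3) i : ℝ))/((p:ℝ)+2)))
          ≤ ∑ i, μ i * (2*Br/((p:ℝ)+1)) :=
            Finset.sum_le_sum fun i _ => mul_le_mul_of_nonneg_left (hab i) (hμ i).le
        _ = 2*Br/((p:ℝ)+1) := by rw [← Finset.sum_mul, hsum, one_mul]
    have hx12 : 1 - qfun μ K p ≤ 1/2 := by
      have : 2*Br/((p:ℝ)+1) ≤ 1/2 := by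
        rw [div_le_iff₀ hp1]; nlinarith
      linarith
    have hq0 : 0 < qfun μ K p := by linarith
    -- the identity for 2S - (p+1)(1-q)
    have hC : 2 * Sfun μ K p - ((p:ℝ)+1) * (1 - qfun μ K p)
        = ∑ i, μ i * (((K (p+3) i : ℝ) + (K (p+3) i : ℝ)^2)/((p:ℝ)+2)) := by
      rw [h1q]
      unfold Sfun
      rw [Finset.mul_sum, Finset.mul_sum, ← Finset.sum_sub_distrib]
      refine Finset.sum_congr rfl fun i _ => ?_
      field_simp
      ring
    have hC0 : 0 ≤ ∑ i, μ i * (((K (p+3) i : ℝ) + (K (p+3) i : ℝ)^2)/((p:ℝ)+2)) :=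
      Finset.sum_nonneg fun i _ => mul_nonneg (hμ i).le (by positivity)
    have hCB : ∑ i, μ i * (((K (p+3) i : ℝ) + (K (p+3) i : ℝ)^2)/((p:ℝ)+2))
        ≤ (Br+Br^2)/((p:ℝ)+1) := by
      calc ∑ i, μ i * (((K (p+3) i : ℝ) + (K (p+3) i : ℝ)^2)/((p:ℝ)+2))
          ≤ ∑ i, μ i * ((Br+Br^2)/((p:ℝ)+1)) := by
            refine Finset.sum_le_sum fun i _ => mul_le_mul_of_nonneg_left ?_ (hμ i).le
            have h1 := hk1 i; have h2 := hkB i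
            exact div_le_div₀ (by positivity) (by nlinarith) hp1 (by linarith)
        _ = (Br+Br^2)/((p:ℝ)+1) := by rw [← Finset.sum_mul, hsum, one_mul]
    refine ⟨hq0, ?_, ?_⟩
    · -- lower bound
      have hloginv := Real.log_le_sub_one_of_pos (inv_pos.mpr hq0)
      rw [Real.log_inv] at hloginv
      have hinv : (qfun μ K p)⁻¹ ≤ 1 + (1 - qfun μ K p) + 2*(1 - qfun μ K p)^2 := by
        rw [inv_eq_one_div, div_le_iff₀ hq0]
        nlinarith [mul_nonneg (sq_nonneg (1 - qfun μ K p))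
          (by linarith : (0:ℝ) ≤ 2*(qfun μ K p) - 1)]
      have hlogLB : -(1 - qfun μ K p) - 2*(1 - qfun μ K p)^2 ≤ Real.log (qfun μ K p) := by
        linarith
      have h1 : ((p:ℝ)+1) * (-(1 - qfun μ K p) - 2*(1 - qfun μ K p)^2)
          ≤ ((p:ℝ)+1) * Real.log (qfun μ K p) :=
        mul_le_mul_of_nonneg_left hlogLB hp1.le
      have h2 : ((p:ℝ)+1) * (-(1 - qfun μ K p) - 2*(1 - qfun μ K p)^2)
          = -(((p:ℝ)+1)*(1 - qfun μ K p)) - 2*(((p:ℝ)+1)*(1 - qfun μ K p)^2) := by ring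
      have hxp : (1 - qfun μ K p)*((p:ℝ)+1) ≤ 2*Br := by
        calc (1 - qfun μ K p)*((p:ℝ)+1) ≤ (2*Br/((p:ℝ)+1))*((p:ℝ)+1) :=
              mul_le_mul_of_nonneg_right hxB hp1.le
          _ = 2*Br := by field_simp
      have h3 : ((p:ℝ)+1)*(1 - qfun μ K p)^2 ≤ 4*Br^2/((p:ℝ)+1) := by
        rw [le_div_iff₀ hp1]
        nlinarith [mul_self_le_mul_self (mul_nonneg hx0 hp1.le) hxp]
      have hatom : 0 ≤ Br^2/((p:ℝ)+1) := by positivity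
      have e7 : -(9*Br^2)/((p:ℝ)+1) = -(9*(Br^2/((p:ℝ)+1))) := by ring
      have e8 : 4*Br^2/((p:ℝ)+1) = 4*(Br^2/((p:ℝ)+1)) := by ring
      unfold Efun
      linarith [h1, h2, h3, hC, hC0, hatom, e7, e8]
    · -- upper bound
      have hlog := Real.log_le_sub_one_of_pos hq0
      have h1 : ((p:ℝ)+1) * Real.log (qfun μ K p) ≤ ((p:ℝ)+1) * (qfun μ K p - 1) :=
        mul_le_mul_of_nonneg_left hlog hp1.le
      have h2 : ((p:ℝ)+1)*(qfun μ K p - 1) = -(((p:ℝ)+1)*(1 - qfun μ K p)) := by ring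
      unfold Efun
      linarith [h1, h2, hC, hCB]
  -- limit of E
  have hdiv : ∀ c : ℝ, Filter.Tendsto (fun p : ℕ => c/((p:ℝ)+1)) Filter.atTop (nhds 0) :=
    fun c => Filter.Tendsto.div_atTop tendsto_const_nhds
      (Filter.tendsto_atTop_add_const_right _ 1 tendsto_natCast_atTop_atTop)
  have hElim : Filter.Tendsto (fun p => Efun μ K p) Filter.atTop (nhds 0) := by
    refine tendsto_of_tendsto_of_tendsto_of_le_of_le' (hdiv (-(9*Br^2))) (hdiv (Br+Br^2)) ?_ ?_
    · exact main.mono fun p h => h.2.1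
    · exact main.mono fun p h => h.2.2
  have hexp : Filter.Tendsto (fun p => Real.exp (Efun μ K p)) Filter.atTop (nhds 1) := by
    have := (Real.continuous_exp.tendsto 0).comp hElim
    simpa [Function.comp_def] using this
  have hfrac : Filter.Tendsto (fun p : ℕ => ((p:ℝ)+3)/((p:ℝ)+2)) Filter.atTop (nhds 1) := by
    have h1 : Filter.Tendsto (fun p : ℕ => 1/((p:ℝ)+2)) Filter.atTop (nhds 0) :=
      Filter.Tendsto.div_atTop tendsto_const_nhds
        (Filter.tendsto_atTop_add_const_right _ 2 tendsto_natCast_atTop_atTop)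
    have h0 : Filter.Tendsto (fun p : ℕ => 1 + 1/((p:ℝ)+2)) Filter.atTop (nhds 1) := by
      simpa using tendsto_const_nhds.add h1
    refine h0.congr fun p => ?_
    have hp2 : ((p:ℝ)+2) ≠ 0 := by positivity
    field_simp
    ring
  have hmul : Filter.Tendsto (fun p : ℕ => ((p:ℝ)+3)/((p:ℝ)+2) * Real.exp (Efun μ K p))
      Filter.atTop (nhds 1) := by
    simpa using hfrac.mul hexp
  refine (Filter.tendsto_add_atTop_iff_nat 1).mp ?_
  show Filter.Tendsto (fun p : ℕ =>
      (((p + 3).choose 2 : ℝ) * Pr (p + 3) μ (K (p + 3)) (Uevent c0 (0 : Fin (p + 3)) 1)) /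
        ((μ c0) ^ 2 / 2 * Real.exp (-2 * ∑ i, μ i * (K (p + 3) i : ℝ))))
      Filter.atTop (nhds 1)
  refine Filter.Tendsto.congr' ?_ hmul
  filter_upwards [main] with p hmain
  obtain ⟨hq0, -, -⟩ := hmain
  have hp2 : (0:ℝ) < (p:ℝ)+2 := by positivity
  rw [pr_formula p μ (K (p+3)) c0 (hK1 (p+3))]
  have hdvd : 2 ∣ (p+3)*(p+2) := by
    rw [mul_comm]
    exact (Nat.even_mul_succ_self (p+2)).two_dvd
  have hch : (p+3).choose 2 = (p+3)*(p+2)/2 := by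
    rw [Nat.choose_two_right]
    rfl
  have hchoose : (((p+3).choose 2 : ℕ) : ℝ) = ((p:ℝ)+3)*((p:ℝ)+2)/2 := by
    rw [hch, Nat.cast_div hdvd (by norm_num)]
    push_cast; ring
  rw [hchoose]
  have hq0' : 0 < ∑ i, μ i * (p.choose (K (p+3) i) : ℝ) / ((p+2).choose (K (p+3) i) : ℝ) := hq0
  rw [pow_eq_exp hq0' (p+1)]
  unfold Efun qfun Sfun
  rw [Real.exp_add]
  rw [show (-2 : ℝ) * ∑ i, μ i * (K (p+3) i : ℝ) = -(2 * ∑ i, μ i * (K (p+3) i : ℝ)) by ring,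
    Real.exp_neg]
  push_cast
  field_simp [Real.exp_ne_zero, (hμ c0).ne']
end
end

section
/- In the inhomogeneous random K-out graph H(n; μ, K) with r ≥ 2, 1 ≤ K_1 ≤ … ≤ K_r < n, and μ̃ = Σ_{i=1}^{r−1} μ_i = 1 − μ_r, for each ℓ with 2 ≤ ℓ ≤ ⌊n/2⌋ one has C(n, ℓ) · P[B_{n,ℓ}] ≤ μ̃^ℓ · A_{n,ℓ}, where A_{n,ℓ} = exp( ((1−μ̃)/μ̃) · ℓ · (ℓ/n)^{K_r−1} − (1−μ̃)·(n−ℓ)·(1 − e^{−ℓ(K_r−1)/n}) ). -/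
open Finset Filter

noncomputable section

lemma descFactorial_mul_pow_le (a b : ℕ) (h : a ≤ b) :
    ∀ k, a.descFactorial k * b ^ k ≤ b.descFactorial k * a ^ k := by
  intro k
  induction k with
  | zero => simp
  | succ k ih =>
    have h2 : (a - k) * b ≤ (b - k) * a := by
      rcases le_or_gt a k with hk | hk
      · simp [Nat.sub_eq_zero_of_le hk]
      · rw [Nat.sub_mul, Nat.sub_mul, mul_comm a b, mul_comm b a]
        exact Nat.sub_le_sub_left (Nat.mul_le_mul_left k h) (a * b)
    calc a.descFactorial (k+1) * b ^ (k+1)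
        = ((a - k) * b) * (a.descFactorial k * b ^ k) := by
          rw [Nat.descFactorial_succ, pow_succ]; ring
      _ ≤ ((b - k) * a) * (b.descFactorial k * a ^ k) := Nat.mul_le_mul h2 ih
      _ = b.descFactorial (k+1) * a ^ (k+1) := by
          rw [Nat.descFactorial_succ, pow_succ]; ring

lemma choose_div_le' (a b k : ℕ) (hab : a ≤ b) (hkb : k ≤ b) (hb : 0 < b) :
    (a.choose k : ℝ) / (b.choose k : ℝ) ≤ ((a : ℝ) / b) ^ k := by
  have hnat : a.choose k * b ^ k ≤ b.choose k * a ^ k := by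
    have := descFactorial_mul_pow_le a b hab k
    rw [Nat.descFactorial_eq_factorial_mul_choose, Nat.descFactorial_eq_factorial_mul_choose] at this
    rw [mul_assoc, mul_assoc] at this
    exact Nat.le_of_mul_le_mul_left this (Nat.factorial_pos k)
  have hbc : (0 : ℝ) < b.choose k := by exact_mod_cast Nat.choose_pos hkb
  have hbp : (0 : ℝ) < (b : ℝ) ^ k := by positivity
  rw [div_pow, div_le_div_iff₀ hbc hbp]
  have : ((a.choose k * b ^ k : ℕ) : ℝ) ≤ ((b.choose k * a ^ k : ℕ) : ℝ) := by exact_mod_cast hnat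
  push_cast at this
  linarith

lemma choose_entropy (n l : ℕ) (h : l ≤ n) :
    n.choose l * (l ^ l * (n - l) ^ (n - l)) ≤ n ^ n := by
  have hx : l + (n - l) = n := Nat.add_sub_cancel' h
  have hp := add_pow l (n - l) n
  rw [hx] at hp
  rw [hp]
  have hmem : l ∈ range (n + 1) := mem_range.2 (Nat.lt_succ_of_le h)
  calc n.choose l * (l ^ l * (n - l) ^ (n - l)) = l ^ l * (n - l) ^ (n - l) * n.choose l := by ring
    _ ≤ ∑ k ∈ range (n + 1), l ^ k * (n - l) ^ (n - k) * n.choose k :=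
      single_le_sum (f := fun k => l ^ k * (n - l) ^ (n - k) * n.choose k) (fun i _ => Nat.zero_le _) hmem

lemma pr_B_eq (r n : ℕ) (μ : Fin r → ℝ) (K : Fin r → ℕ) (l : ℕ) (hln : l ≤ n) :
    Pr n μ K (Bevent n r l) =
      (∑ c : Fin r, ((l - 1).choose (K c) : ℝ) * (μ c / ((n - 1).choose (K c) : ℝ))) ^ l *
      (∑ c : Fin r, ((n - l - 1).choose (K c) : ℝ) * (μ c / ((n - 1).choose (K c) : ℝ))) ^ (n - l) := by
  classical
  set low : Finset (Fin n) := univ.filter (fun v => (v : ℕ) < l) with hlowdef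
  have hlowmem : ∀ v : Fin n, v ∈ low ↔ (v : ℕ) < l := by
    intro v; simp [hlowdef]
  have hlowcard : low.card = l := by
    have : low = Finset.map ⟨Fin.castLE hln, Fin.castLE_injective hln⟩ univ := by
      ext v
      simp only [hlowdef, mem_filter, mem_univ, true_and, Finset.mem_map,
        Function.Embedding.coeFn_mk]
      constructor
      · intro hv; exact ⟨⟨(v : ℕ), hv⟩, Fin.ext rfl⟩
      · rintro ⟨i, rfl⟩; exact i.2
    rw [this, Finset.card_map, Finset.card_univ, Fintype.card_fin]
  set side : Fin n → Finset (Fin n) := fun v => if (v : ℕ) < l then low else lowᶜ with hsidedef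
  have hmemside : ∀ v : Fin n, v ∈ side v := by
    intro v
    by_cases h : (v : ℕ) < l
    · simp [hsidedef, h, hlowmem]
    · simp [hsidedef, h, hlowmem]
  set g : Fin n → Fin r × Finset (Fin n) → ℝ := fun v p =>
    if p.2.card = K p.1 ∧ v ∉ p.2 ∧ p.2 ⊆ side v then
      μ p.1 / ((n - 1).choose (K p.1) : ℝ) else 0 with hgdef
  have hB : ∀ ω : Config n r, ω ∈ Bevent n r l ↔ ∀ v, (ω v).2 ⊆ side v := by
    intro ω
    constructor
    · intro h v w hw
      by_cases hv : (v : ℕ) < l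
      · simp only [hsidedef, if_pos hv]
        rw [hlowmem]
        by_contra hwl
        exact (h v w hv hwl).2 hw
      · simp only [hsidedef, if_neg hv, Finset.mem_compl]
        rw [hlowmem]
        intro hwl
        exact (h w v hwl hv).1 hw
    · intro h u v hu hv
      constructor
      · intro hmem
        have := h v hmem
        simp only [hsidedef, if_neg hv, Finset.mem_compl] at this
        exact this ((hlowmem u).2 hu)
      · intro hmem
        have := h u hmem
        simp only [hsidedef, if_pos hu] at this
        exact hv ((hlowmem v).1 this)
  have hind : ∀ ω : Config n r,
      (Bevent n r l).indicator (wt n μ K) ω = ∏ v, g v (ω v) := by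
    intro ω
    by_cases hω : ω ∈ Bevent n r l
    · rw [Set.indicator_of_mem hω, wt]
      refine Finset.prod_congr rfl fun v _ => ?_
      have hsub := (hB ω).1 hω v
      by_cases h1 : (ω v).2.card = K (ω v).1 ∧ v ∉ (ω v).2
      · rw [if_pos h1, hgdef]
        exact (if_pos ⟨h1.1, h1.2, hsub⟩).symm
      · rw [if_neg h1, hgdef]
        refine (if_neg ?_).symm
        tauto
    · rw [Set.indicator_of_notMem hω]
      obtain ⟨v, hv⟩ := not_forall.1 (fun h => hω ((hB ω).2 h))
      refine (Finset.prod_eq_zero (Finset.mem_univ v) ?_).symm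
      rw [hgdef]
      exact if_neg (by tauto)
  have hPr : Pr n μ K (Bevent n r l) = ∏ v : Fin n, ∑ p : Fin r × Finset (Fin n), g v p := by
    rw [Pr]
    simp_rw [hind]
    rw [Finset.prod_univ_sum]
    rw [Fintype.piFinset_univ]
  have hsum : ∀ v : Fin n, (∑ p : Fin r × Finset (Fin n), g v p) =
      ∑ c : Fin r, (((side v).card - 1).choose (K c) : ℝ) * (μ c / ((n - 1).choose (K c) : ℝ)) := by
    intro v
    rw [Fintype.sum_prod_type]
    refine Finset.sum_congr rfl fun c _ => ?_
    have hiff : ∀ S : Finset (Fin n),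
        (S.card = K c ∧ v ∉ S ∧ S ⊆ side v) ↔ S ∈ Finset.powersetCard (K c) ((side v).erase v) := by
      intro S
      rw [Finset.mem_powersetCard, Finset.subset_erase]
      tauto
    have : ∀ S : Finset (Fin n), g v (c, S) =
        if S ∈ Finset.powersetCard (K c) ((side v).erase v) then
          μ c / ((n - 1).choose (K c) : ℝ) else 0 := by
      intro S
      rw [hgdef]
      simp only
      exact if_congr (hiff S) rfl rfl
    simp_rw [this]
    rw [Finset.sum_ite_mem, Finset.univ_inter, Finset.sum_const,
      Finset.card_powersetCard, Finset.card_erase_of_mem (hmemside v)]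
    rw [nsmul_eq_mul]
  rw [hPr]
  simp_rw [hsum]
  rw [← Finset.prod_mul_prod_compl low]
  have h1 : ∀ v ∈ low, (∑ c : Fin r, (((side v).card - 1).choose (K c) : ℝ) *
      (μ c / ((n - 1).choose (K c) : ℝ))) =
      ∑ c : Fin r, ((l - 1).choose (K c) : ℝ) * (μ c / ((n - 1).choose (K c) : ℝ)) := by
    intro v hv
    have hvl : (v : ℕ) < l := (hlowmem v).1 hv
    simp only [hsidedef, if_pos hvl, hlowcard]
  have h2 : ∀ v ∈ lowᶜ, (∑ c : Fin r, (((side v).card - 1).choose (K c) : ℝ) *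
      (μ c / ((n - 1).choose (K c) : ℝ))) =
      ∑ c : Fin r, ((n - l - 1).choose (K c) : ℝ) * (μ c / ((n - 1).choose (K c) : ℝ)) := by
    intro v hv
    have hvl : ¬ (v : ℕ) < l := fun h => (Finset.mem_compl.1 hv) ((hlowmem v).2 h)
    have hcc : (lowᶜ : Finset (Fin n)).card = n - l := by
      rw [Finset.card_compl, hlowcard, Fintype.card_fin]
    simp only [hsidedef, if_neg hvl, hcc]
  rw [Finset.prod_congr rfl h1, Finset.prod_congr rfl h2, Finset.prod_const, Finset.prod_const,
    hlowcard, Finset.card_compl, hlowcard, Fintype.card_fin]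

set_option maxHeartbeats 1000000 in
/-- eq. (21)–(22) of the paper. For `2 ≤ ℓ ≤ ⌊n/2⌋`,
`C(n,ℓ)·P[B_{n,ℓ}] ≤ μ̃^ℓ · A_{n,ℓ}` where
`A_{n,ℓ} = exp(((1−μ̃)/μ̃)·ℓ·(ℓ/n)^{K_r−1} − (1−μ̃)(n−ℓ)(1 − e^{−ℓ(K_r−1)/n}))`. -/
theorem choose_mul_prob_B_upper
    (r : ℕ) (hr : 2 ≤ r) (μ : Fin r → ℝ)
    (hμ : ∀ i, 0 < μ i) (hsum : ∑ i, μ i = 1)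
    (lst : Fin r) (hlst : (lst : ℕ) = r - 1)
    (μt : ℝ) (hμt : μt = ∑ i ∈ Finset.univ.erase lst, μ i)
    (n : ℕ) (hn : 2 ≤ n)
    (K : Fin r → ℕ) (hmono : Monotone K) (hone : ∀ i, 1 ≤ K i) (hlt : ∀ i, K i < n)
    (l : ℕ) (hl2 : 2 ≤ l) (hl : l ≤ n / 2) :
    (n.choose l : ℝ) * Pr n μ K (Bevent n r l) ≤
      μt ^ l *
        Real.exp (((1 - μt) / μt) * (l : ℝ) * ((l : ℝ) / (n : ℝ)) ^ (K lst - 1) -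
          (1 - μt) * ((n : ℝ) - (l : ℝ)) *
            (1 - Real.exp (-((l : ℝ) * ((K lst : ℝ) - 1)) / (n : ℝ)))) := by
  classical
  -- basic numeric facts
  have h2l : l * 2 ≤ n := (Nat.le_div_iff_mul_le two_pos).1 hl
  have hlnN : l < n := by omega
  have hln : l ≤ n := hlnN.le
  have hn0 : (0 : ℝ) < n := by exact_mod_cast (by omega : 0 < n)
  have hl0 : (0 : ℝ) < l := by exact_mod_cast (by omega : 0 < l)
  have hlnR : (l : ℝ) ≤ n := by exact_mod_cast hln
  have hn2R : (2:ℝ) ≤ n := by exact_mod_cast hn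
  have hnl : ((n - l : ℕ) : ℝ) = (n : ℝ) - l := by rw [Nat.cast_sub hln]
  have hp0 : (0 : ℝ) ≤ (l : ℝ) / n := by positivity
  have hp1 : (l : ℝ) / n ≤ 1 := div_le_one_of_le₀ hlnR hn0.le
  have hq0 : (0 : ℝ) ≤ ((n : ℝ) - l) / n := by
    apply div_nonneg (by linarith) hn0.le
  have hq1 : ((n : ℝ) - l) / n ≤ 1 := by
    rw [div_le_one hn0]; linarith
  -- μ facts
  have hμlst : μ lst = 1 - μt := by
    have := Finset.add_sum_erase Finset.univ μ (Finset.mem_univ lst)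
    rw [hsum] at this
    rw [hμt]; linarith
  have hμt0 : 0 < μt := by
    rw [hμt]
    apply Finset.sum_pos (fun i _ => hμ i)
    have : (Finset.univ.erase lst).card = r - 1 := by
      rw [Finset.card_erase_of_mem (Finset.mem_univ lst), Finset.card_univ, Fintype.card_fin]
    apply Finset.card_pos.1
    omega
  have hμl0 : 0 < 1 - μt := by rw [← hμlst]; exact hμ lst
  set k := K lst with hk
  set km := k - 1 with hkm
  have hkm1 : km + 1 = k := Nat.succ_pred_eq_of_pos (hone lst)
  have hkmR : (km : ℝ) = (k : ℝ) - 1 := by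
    rw [hkm, Nat.cast_sub (hone lst)]; norm_num [hk]
  set p : ℝ := (l : ℝ) / n with hpdef
  set q : ℝ := ((n : ℝ) - l) / n with hqdef
  set pk : ℝ := p ^ km with hpk
  set qk : ℝ := q ^ km with hqk
  have hpk0 : 0 ≤ pk := pow_nonneg hp0 km
  have hqk0 : 0 ≤ qk := pow_nonneg hq0 km
  -- bounds on the two factors
  set F1 : ℝ := ∑ c : Fin r, ((l - 1).choose (K c) : ℝ) * (μ c / ((n - 1).choose (K c) : ℝ)) with hF1def
  set F2 : ℝ := ∑ c : Fin r, ((n - l - 1).choose (K c) : ℝ) * (μ c / ((n - 1).choose (K c) : ℝ)) with hF2def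
  have hchoose_nonneg : ∀ (a : ℕ) (c : Fin r), (0:ℝ) ≤ (a.choose (K c) : ℝ) * (μ c / ((n - 1).choose (K c) : ℝ)) := by
    intro a c
    have := (hμ c).le
    positivity
  have hF1nn : 0 ≤ F1 := Finset.sum_nonneg fun c _ => hchoose_nonneg _ c
  have hF2nn : 0 ≤ F2 := Finset.sum_nonneg fun c _ => hchoose_nonneg _ c
  have hterm1 : ∀ c : Fin r, ((l - 1).choose (K c) : ℝ) * (μ c / ((n - 1).choose (K c) : ℝ)) ≤
      μ c * p ^ (K c) := by
    intro c
    have h1 : ((l - 1).choose (K c) : ℝ) * (μ c / ((n - 1).choose (K c) : ℝ)) =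
        μ c * (((l - 1).choose (K c) : ℝ) / ((n - 1).choose (K c) : ℝ)) := by ring
    rw [h1]
    apply mul_le_mul_of_nonneg_left _ (hμ c).le
    calc ((l - 1).choose (K c) : ℝ) / ((n - 1).choose (K c) : ℝ)
        ≤ (((l - 1 : ℕ) : ℝ) / ((n - 1 : ℕ) : ℝ)) ^ (K c) :=
          choose_div_le' (l - 1) (n - 1) (K c) (by omega) (by have := hlt c; omega) (by omega)
      _ ≤ p ^ (K c) := by
          apply pow_le_pow_left₀ (by positivity)
          rw [Nat.cast_sub (by omega : 1 ≤ l), Nat.cast_sub (by omega : 1 ≤ n)]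
          rw [hpdef, div_le_div_iff₀ (by push_cast; linarith) hn0]
          push_cast; nlinarith
  have hterm2 : ∀ c : Fin r, ((n - l - 1).choose (K c) : ℝ) * (μ c / ((n - 1).choose (K c) : ℝ)) ≤
      μ c * q ^ (K c) := by
    intro c
    have h1 : ((n - l - 1).choose (K c) : ℝ) * (μ c / ((n - 1).choose (K c) : ℝ)) =
        μ c * (((n - l - 1).choose (K c) : ℝ) / ((n - 1).choose (K c) : ℝ)) := by ring
    rw [h1]
    apply mul_le_mul_of_nonneg_left _ (hμ c).le
    calc ((n - l - 1).choose (K c) : ℝ) / ((n - 1).choose (K c) : ℝ)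
        ≤ (((n - l - 1 : ℕ) : ℝ) / ((n - 1 : ℕ) : ℝ)) ^ (K c) :=
          choose_div_le' (n - l - 1) (n - 1) (K c) (by omega) (by have := hlt c; omega) (by omega)
      _ ≤ q ^ (K c) := by
          apply pow_le_pow_left₀ (by positivity)
          rw [Nat.cast_sub (by omega : 1 ≤ n - l), Nat.cast_sub (by omega : l ≤ n),
            Nat.cast_sub (by omega : 1 ≤ n)]
          rw [hqdef, div_le_div_iff₀ (by push_cast; linarith) hn0]
          push_cast; nlinarith
  -- sum bounds
  have hsplit : ∀ (x : ℝ), 0 ≤ x → x ≤ 1 →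
      (∑ c : Fin r, μ c * x ^ (K c)) ≤ x * (μt + (1 - μt) * x ^ km) := by
    intro x hx0 hx1
    rw [← Finset.add_sum_erase Finset.univ (fun c => μ c * x ^ (K c)) (Finset.mem_univ lst)]
    have h1 : μ lst * x ^ (K lst) = x * ((1 - μt) * x ^ km) := by
      rw [hμlst, ← hk, ← hkm1, pow_succ]; ring
    have h2 : (∑ c ∈ Finset.univ.erase lst, μ c * x ^ (K c)) ≤ x * μt := by
      rw [hμt, Finset.mul_sum]
      apply Finset.sum_le_sum
      intro c _
      rw [mul_comm x (μ c)]
      apply mul_le_mul_of_nonneg_left _ (hμ c).le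
      calc x ^ (K c) ≤ x ^ 1 := pow_le_pow_of_le_one hx0 hx1 (hone c)
        _ = x := pow_one x
    rw [h1]
    calc x * ((1 - μt) * x ^ km) + ∑ c ∈ Finset.univ.erase lst, μ c * x ^ (K c)
        ≤ x * ((1 - μt) * x ^ km) + x * μt := by linarith
      _ = x * (μt + (1 - μt) * x ^ km) := by ring
  have hF1 : F1 ≤ p * (μt + (1 - μt) * pk) := by
    calc F1 ≤ ∑ c : Fin r, μ c * p ^ (K c) := Finset.sum_le_sum fun c _ => hterm1 c
      _ ≤ p * (μt + (1 - μt) * pk) := hsplit p hp0 hp1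
  have hF2 : F2 ≤ q * (μt + (1 - μt) * qk) := by
    calc F2 ≤ ∑ c : Fin r, μ c * q ^ (K c) := Finset.sum_le_sum fun c _ => hterm2 c
      _ ≤ q * (μt + (1 - μt) * qk) := hsplit q hq0 hq1
  have hb1nn : (0:ℝ) ≤ μt + (1 - μt) * pk := add_nonneg hμt0.le (mul_nonneg hμl0.le hpk0)
  have hb2nn : (0:ℝ) ≤ μt + (1 - μt) * qk := add_nonneg hμt0.le (mul_nonneg hμl0.le hqk0)
  -- entropy bound
  have hentropy : (n.choose l : ℝ) * (p ^ l * q ^ (n - l)) ≤ 1 := by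
    have hnat := choose_entropy n l hln
    have hnn : (0:ℝ) < (n:ℝ) ^ n := by positivity
    have hcast : (n.choose l : ℝ) * ((l:ℝ) ^ l * ((n:ℝ) - l) ^ (n - l)) ≤ (n:ℝ) ^ n := by
      have h := (Nat.cast_le (α := ℝ)).2 hnat
      push_cast at h
      rwa [hnl] at h
    have hsplitpow : (n:ℝ) ^ l * (n:ℝ) ^ (n - l) = (n:ℝ) ^ n := by
      rw [← pow_add]
      congr 1
      omega
    rw [hpdef, hqdef, div_pow, div_pow, div_mul_div_comm, hsplitpow]
    have heq : (n.choose l : ℝ) * ((l:ℝ) ^ l * ((n:ℝ) - l) ^ (n - l) / (n:ℝ) ^ n) =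
        ((n.choose l : ℝ) * ((l:ℝ) ^ l * ((n:ℝ) - l) ^ (n - l))) / (n:ℝ) ^ n := by ring
    rw [heq, div_le_one hnn]
    exact hcast
  -- exponential bounds
  have hexp1 : (μt + (1 - μt) * pk) ^ l ≤ μt ^ l * Real.exp ((l : ℕ) * (((1 - μt) / μt) * pk)) := by
    have hbase : μt + (1 - μt) * pk ≤ μt * Real.exp (((1 - μt) / μt) * pk) := by
      have hd : (1 - μt) / μt * μt = 1 - μt := div_mul_cancel₀ _ (ne_of_gt hμt0)
      have h1 : μt + (1 - μt) * pk = μt * (((1 - μt) / μt) * pk + 1) := by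
        linear_combination (-pk) * hd
      rw [h1]
      exact mul_le_mul_of_nonneg_left (Real.add_one_le_exp _) hμt0.le
    calc (μt + (1 - μt) * pk) ^ l ≤ (μt * Real.exp (((1 - μt) / μt) * pk)) ^ l :=
          pow_le_pow_left₀ hb1nn hbase l
      _ = μt ^ l * Real.exp ((l : ℕ) * (((1 - μt) / μt) * pk)) := by
          rw [mul_pow, Real.exp_nat_mul]
  set E : ℝ := Real.exp (-((l : ℝ) * ((k : ℝ) - 1)) / (n : ℝ)) with hEdef
  have hE1 : E ≤ 1 := by
    rw [hEdef, Real.exp_le_one_iff]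
    have : (1:ℝ) ≤ (k:ℝ) := by exact_mod_cast hone lst
    have h0 : 0 ≤ (l : ℝ) * ((k : ℝ) - 1) := by nlinarith
    apply div_nonpos_of_nonpos_of_nonneg _ hn0.le
    linarith
  have hqkE : qk ≤ E := by
    have h1 : q ≤ Real.exp (-((l:ℝ)/n)) := by
      have := Real.add_one_le_exp (-((l:ℝ)/n))
      rw [hqdef]
      have h2 : ((n:ℝ) - l)/n = -((l:ℝ)/n) + 1 := by field_simp; ring
      linarith
    calc qk = q ^ km := hqk
      _ ≤ (Real.exp (-((l:ℝ)/n))) ^ km := pow_le_pow_left₀ hq0 h1 km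
      _ = Real.exp ((km : ℕ) * (-((l:ℝ)/n))) := by rw [Real.exp_nat_mul]
      _ = E := by
          rw [hEdef]
          congr 1
          rw [hkmR]
          ring
  have hexp2 : (μt + (1 - μt) * qk) ^ (n - l) ≤ Real.exp (-(((n - l : ℕ) : ℝ) * ((1 - μt) * (1 - E)))) := by
    have hbase : μt + (1 - μt) * qk ≤ Real.exp (-((1 - μt) * (1 - E))) := by
      have h1 : μt + (1 - μt) * qk ≤ -((1 - μt) * (1 - E)) + 1 := by nlinarith
      linarith [Real.add_one_le_exp (-((1 - μt) * (1 - E)))]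
    calc (μt + (1 - μt) * qk) ^ (n - l) ≤ (Real.exp (-((1 - μt) * (1 - E)))) ^ (n - l) :=
          pow_le_pow_left₀ hb2nn hbase (n - l)
      _ = Real.exp (((n - l : ℕ) : ℝ) * (-((1 - μt) * (1 - E)))) := by rw [Real.exp_nat_mul]
      _ = Real.exp (-(((n - l : ℕ) : ℝ) * ((1 - μt) * (1 - E)))) := by ring_nf
  -- assemble
  have hcnn : (0:ℝ) ≤ (n.choose l : ℝ) := by positivity
  rw [pr_B_eq r n μ K l hln, ← hF1def, ← hF2def]
  have step1 : (n.choose l : ℝ) * (F1 ^ l * F2 ^ (n - l)) ≤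
      (n.choose l : ℝ) * ((p * (μt + (1 - μt) * pk)) ^ l * (q * (μt + (1 - μt) * qk)) ^ (n - l)) := by
    apply mul_le_mul_of_nonneg_left _ hcnn
    apply mul_le_mul (pow_le_pow_left₀ hF1nn hF1 l) (pow_le_pow_left₀ hF2nn hF2 (n - l))
      (pow_nonneg hF2nn _) (pow_nonneg (mul_nonneg hp0 hb1nn) _)
  have step2 : (n.choose l : ℝ) * ((p * (μt + (1 - μt) * pk)) ^ l * (q * (μt + (1 - μt) * qk)) ^ (n - l))
      = ((n.choose l : ℝ) * (p ^ l * q ^ (n - l))) * ((μt + (1 - μt) * pk) ^ l * (μt + (1 - μt) * qk) ^ (n - l)) := by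
    rw [mul_pow, mul_pow]; ring
  have step3 : ((n.choose l : ℝ) * (p ^ l * q ^ (n - l))) * ((μt + (1 - μt) * pk) ^ l * (μt + (1 - μt) * qk) ^ (n - l))
      ≤ 1 * ((μt ^ l * Real.exp ((l : ℕ) * (((1 - μt) / μt) * pk))) * Real.exp (-(((n - l : ℕ) : ℝ) * ((1 - μt) * (1 - E))))) := by
    apply mul_le_mul hentropy _ (mul_nonneg (pow_nonneg hb1nn _) (pow_nonneg hb2nn _)) (by norm_num)
    apply mul_le_mul hexp1 hexp2 (pow_nonneg hb2nn _)
      (mul_nonneg (pow_nonneg hμt0.le _) (Real.exp_pos _).le)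
  calc (n.choose l : ℝ) * (F1 ^ l * F2 ^ (n - l))
      ≤ 1 * ((μt ^ l * Real.exp ((l : ℕ) * (((1 - μt) / μt) * pk))) * Real.exp (-(((n - l : ℕ) : ℝ) * ((1 - μt) * (1 - E))))) :=
        le_trans step1 (step2.le.trans step3)
    _ = μt ^ l * Real.exp (((1 - μt) / μt) * (l : ℝ) * ((l : ℝ) / (n : ℝ)) ^ (K lst - 1) -
          (1 - μt) * ((n : ℝ) - (l : ℝ)) * (1 - Real.exp (-((l : ℝ) * ((K lst : ℝ) - 1)) / (n : ℝ)))) := by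
        rw [one_mul, mul_assoc, ← Real.exp_add, hnl, hpk, hpdef, ← hk, ← hkm, ← hEdef]
        congr 2
        ring
end
end
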